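/- For any real numbers f_1, …, f_K and any α ∈ ℝ, it holds that log(∑_{m=1}^K e^{f_m}) ≤ α + ∑_{m=1}^K log(1 + e^{f_m - α}). -/

import Mathlib

lemma sum_le_prod_one_add {K : ℕ} (x : Fin K → ℝ) (hx : ∀ m, 0 ≤ x m) :
    ∑ m, x m ≤ ∏ m, (1 + x m) := by
  induction K with
  | zero => simp
  | succ n ih =>
    rw [Fin.sum_univ_succ, Fin.prod_univ_succ]
    have h1 : ∑ m : Fin n, x m.succ ≤ ∏ m : Fin n, (1 + x m.succ) :=
      ih (fun m => x m.succ) (fun m => hx m.succ)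
    have h2 : (1:ℝ) ≤ ∏ m : Fin n, (1 + x m.succ) := by
      calc (1:ℝ) = ∏ _m : Fin n, (1:ℝ) := by simp
        _ ≤ ∏ m : Fin n, (1 + x m.succ) :=
          Finset.prod_le_prod (fun i _ => zero_le_one)
            (fun i _ => by linarith [hx i.succ])
    nlinarith [hx 0]

/-- Bouchard's variational upper bound on the log-sum-exp function:
`log (∑ m, e^{f m}) ≤ α + ∑ m, log (1 + e^{f m - α})`. -/
theorem bouchard_logsumexp_bound {K : ℕ} (hK : 0 < K) (f : Fin K → ℝ) (α : ℝ) :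
    Real.log (∑ m, Real.exp (f m)) ≤ α + ∑ m, Real.log (1 + Real.exp (f m - α)) := by
  have hpos : ∀ m : Fin K, (0:ℝ) < 1 + Real.exp (f m - α) := fun m => by
    positivity
  have key : ∑ m, Real.exp (f m) ≤ Real.exp α * ∏ m, (1 + Real.exp (f m - α)) := by
    have : ∑ m, Real.exp (f m) = Real.exp α * ∑ m, Real.exp (f m - α) := by
      rw [Finset.mul_sum]
      congr 1; ext m; rw [← Real.exp_add]; ring_nf
    rw [this]
    exact mul_le_mul_of_nonneg_left
      (sum_le_prod_one_add _ (fun m => (Real.exp_pos _).le)) (Real.exp_pos _).le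
  calc Real.log (∑ m, Real.exp (f m))
      ≤ Real.log (Real.exp α * ∏ m, (1 + Real.exp (f m - α))) := by
        apply Real.log_le_log _ key
        exact Finset.sum_pos (fun m _ => Real.exp_pos _) (by simpa using Finset.univ_nonempty_iff.mpr ⟨⟨0, hK⟩⟩)
    _ = α + ∑ m, Real.log (1 + Real.exp (f m - α)) := by
        rw [Real.log_mul (Real.exp_pos _).ne' (by positivity), Real.log_exp,
          Real.log_prod (fun m _ => (hpos m).ne')]
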